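/- For any s, t > 0 and any integer n ≥ 2, (min_{1≤k≤n} P{|H_k| ≤ s}) · P{max_{1≤l≤n} |H_l| ≥ s + t} ≤ 2 P{|H_n| ≥ t}. -/

import Mathlib

open MeasureTheory ProbabilityTheory Filter
open Fin.NatCast

namespace LevyPolymer


variable {d n : ℕ}

abbrev Om (d n : ℕ) := Fin (n+1) → (Fin d → ℤ) × ℝ

def XX (i : ℕ) (p : Om d n) : Fin d → ℤ := (p (i : Fin (n+1))).1
def WW (i : ℕ) (p : Om d n) : ℝ := (p (i : Fin (n+1))).2
def SS (k : ℕ) (p : Om d n) : Fin d → ℤ := ∑ i ∈ Finset.range k, XX (i+1) p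
def HH (m : ℕ) (p : Om d n) : ℝ :=
  ∑ j ∈ Finset.Icc 1 m, ∑ k ∈ Finset.Icc 1 m,
    if j < k ∧ SS j p = SS k p then WW j p * WW k p else 0
def CC (n' l : ℕ) (p : Om d n) : ℝ :=
  ∑ j ∈ Finset.Icc 1 l, ∑ k ∈ Finset.Icc (l+1) n',
    if SS j p = SS k p then WW j p * WW k p else 0
def DD (n' l : ℕ) (p : Om d n) : ℝ :=
  ∑ j ∈ Finset.Icc (l+1) n', ∑ k ∈ Finset.Icc (l+1) n',
    if j < k ∧ (∑ i ∈ Finset.Ico j k, XX (i+1) p) = 0 then WW j p * WW k p else 0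
def TT (l : ℕ) (p : Om d n) : Om d n :=
  fun i => if l < (i : ℕ) then ((p i).1, -(p i).2) else p i
def TH (l : ℕ) (p : Om d n) : Om d n := fun i => p (i + (l : Fin (n+1)))

lemma val_cast {i : ℕ} (h : i ≤ n) : ((i : Fin (n+1)) : ℕ) = i := by
  rw [Fin.val_natCast]; exact Nat.mod_eq_of_lt (by omega)

lemma XX_TT (i l : ℕ) (p : Om d n) : XX i (TT l p) = XX i p := by
  unfold XX TT; split <;> rfl

lemma SS_TT (k l : ℕ) (p : Om d n) : SS k (TT l p) = SS k p := by
  unfold SS; exact Finset.sum_congr rfl fun i _ => XX_TT _ _ _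

lemma WW_TT_low {j l : ℕ} (hj : j ≤ l) (p : Om d n) : WW j (TT l p) = WW j p := by
  unfold WW TT
  split
  · next h =>
    exfalso
    rw [Fin.val_natCast] at h
    have := Nat.mod_le j (n+1)
    omega
  · rfl

lemma WW_TT_high {j l : ℕ} (hl : l < j) (hj : j ≤ n) (p : Om d n) :
    WW j (TT l p) = -WW j p := by
  unfold WW TT
  split
  · rfl
  · next h => exfalso; rw [val_cast hj] at h; omega

lemma TT_invol (l : ℕ) (p : Om d n) : TT l (TT l p) = p := by
  funext i
  unfold TT
  by_cases h : l < (i : ℕ) <;> simp [h]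

lemma HH_TT {m l : ℕ} (hm : m ≤ l) (p : Om d n) : HH m (TT l p) = HH m p := by
  unfold HH
  refine Finset.sum_congr rfl fun j hj => Finset.sum_congr rfl fun k hk => ?_
  rw [Finset.mem_Icc] at hj hk
  rw [SS_TT, SS_TT, WW_TT_low (by omega), WW_TT_low (by omega)]

lemma CC_TT (l : ℕ) (p : Om d n) : CC n l (TT l p) = -(CC n l p) := by
  unfold CC
  rw [← Finset.sum_neg_distrib]
  refine Finset.sum_congr rfl fun j hj => ?_
  rw [← Finset.sum_neg_distrib]
  refine Finset.sum_congr rfl fun k hk => ?_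
  rw [Finset.mem_Icc] at hj hk
  rw [SS_TT, SS_TT, WW_TT_low (by omega) , WW_TT_high (by omega) (by omega)]
  split <;> ring

lemma DD_TT (l : ℕ) (p : Om d n) : DD n l (TT l p) = DD n l p := by
  unfold DD
  refine Finset.sum_congr rfl fun j hj => Finset.sum_congr rfl fun k hk => ?_
  rw [Finset.mem_Icc] at hj hk
  rcases Nat.lt_or_ge j k with h | h
  · rw [WW_TT_high (by omega) (by omega), WW_TT_high (by omega) (by omega)]
    rw [show (∑ i ∈ Finset.Ico j k, XX (i+1) (TT l p)) = ∑ i ∈ Finset.Ico j k, XX (i+1) p from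
      Finset.sum_congr rfl fun i _ => XX_TT _ _ _]
    split <;> ring
  · rw [if_neg (by omega), if_neg (by omega)]


lemma SS_sub {j k : ℕ} (h : j ≤ k) (p : Om d n) :
    SS k p - SS j p = ∑ i ∈ Finset.Ico j k, XX (i+1) p :=
  (Finset.sum_Ico_eq_sub _ h).symm

lemma HH_decomp {l : ℕ} (h1 : 1 ≤ l) (hl : l ≤ n) (p : Om d n) :
    HH n p = HH l p + CC n l p + DD n l p := by
  classical
  have hU : Finset.Icc 1 n = Finset.Icc 1 l ∪ Finset.Icc (l+1) n := by
    ext a; simp only [Finset.mem_union, Finset.mem_Icc]; omega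
  have hdisj : Disjoint (Finset.Icc 1 l) (Finset.Icc (l+1) n) := by
    rw [Finset.disjoint_left]
    intro a ha hb
    rw [Finset.mem_Icc] at ha hb
    omega
  unfold HH CC DD
  rw [hU]
  simp only [Finset.sum_union hdisj]
  rw [Finset.sum_add_distrib, Finset.sum_add_distrib]
  have hB : (∑ j ∈ Finset.Icc 1 l, ∑ k ∈ Finset.Icc (l+1) n,
      if j < k ∧ SS j p = SS k p then WW j p * WW k p else 0)
      = ∑ j ∈ Finset.Icc 1 l, ∑ k ∈ Finset.Icc (l+1) n,
      if SS j p = SS k p then WW j p * WW k p else 0 := by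
    refine Finset.sum_congr rfl fun j hj => Finset.sum_congr rfl fun k hk => ?_
    rw [Finset.mem_Icc] at hj hk
    have : j < k := by omega
    rw [if_congr (and_iff_right this) rfl rfl]
  have hC : (∑ j ∈ Finset.Icc (l+1) n, ∑ k ∈ Finset.Icc 1 l,
      if j < k ∧ SS j p = SS k p then WW j p * WW k p else 0) = 0 := by
    refine Finset.sum_eq_zero fun j hj => Finset.sum_eq_zero fun k hk => ?_
    rw [Finset.mem_Icc] at hj hk
    exact if_neg (by rintro ⟨hlt, -⟩; omega)
  have hD : (∑ j ∈ Finset.Icc (l+1) n, ∑ k ∈ Finset.Icc (l+1) n,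
      if j < k ∧ SS j p = SS k p then WW j p * WW k p else 0)
      = ∑ j ∈ Finset.Icc (l+1) n, ∑ k ∈ Finset.Icc (l+1) n,
      if j < k ∧ (∑ i ∈ Finset.Ico j k, XX (i+1) p) = 0 then WW j p * WW k p else 0 := by
    refine Finset.sum_congr rfl fun j hj => Finset.sum_congr rfl fun k hk => ?_
    rcases Nat.lt_or_ge j k with h | h
    · refine if_congr (and_congr_right fun _ => ?_) rfl rfl
      rw [← SS_sub (le_of_lt h) p, sub_eq_zero, eq_comm]
    · rw [if_neg (by rintro ⟨hlt, -⟩; omega), if_neg (by rintro ⟨hlt, -⟩; omega)]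
  rw [hB, hC, hD]
  ring

lemma XX_TH (j l : ℕ) (p : Om d n) : XX j (TH l p) = XX (j + l) p := by
  unfold XX TH; rw [Nat.cast_add]

lemma WW_TH (j l : ℕ) (p : Om d n) : WW j (TH l p) = WW (j + l) p := by
  unfold WW TH; rw [Nat.cast_add]

lemma DD_eq_TH {l : ℕ} (hl : l ≤ n) (p : Om d n) : DD n l p = HH (n - l) (TH l p) := by
  classical
  unfold DD HH
  have hmap : Finset.Icc (l+1) n = (Finset.Icc 1 (n-l)).map (addRightEmbedding l) := by
    rw [Finset.map_add_right_Icc]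
    congr 1 <;> omega
  rw [hmap]
  simp only [Finset.sum_map, addRightEmbedding_apply]
  refine Finset.sum_congr rfl fun j hj => Finset.sum_congr rfl fun k hk => ?_
  rw [Finset.mem_Icc] at hj hk
  rcases Nat.lt_or_ge j k with h | h
  · have hcond : (∑ i ∈ Finset.Ico (j+l) (k+l), XX (i+1) p) = 0 ↔
        SS j (TH l p) = SS k (TH l p) := by
      have hIco : Finset.Ico (j+l) (k+l) = (Finset.Ico j k).map (addRightEmbedding l) := by
        rw [Finset.map_add_right_Ico]
      have hsum : (∑ i ∈ Finset.Ico (j+l) (k+l), XX (i+1) p)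
          = ∑ i ∈ Finset.Ico j k, XX (i+1) (TH l p) := by
        rw [hIco, Finset.sum_map]
        refine Finset.sum_congr rfl fun i _ => ?_
        rw [addRightEmbedding_apply, XX_TH, show i + 1 + l = i + l + 1 from by omega]
      rw [hsum, ← SS_sub (le_of_lt h) (TH l p), sub_eq_zero, eq_comm]
    have hjk : j + l < k + l ↔ j < k := by omega
    rw [WW_TH, WW_TH]
    exact if_congr (and_congr hjk hcond) rfl rfl
  · rw [if_neg (by rintro ⟨hlt, -⟩; omega), if_neg (by rintro ⟨hlt, -⟩; omega)]

lemma DD_self (p : Om d n) : DD n n p = 0 := by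
  unfold DD
  rw [Finset.Icc_eq_empty (by omega), Finset.sum_empty]



variable {γ : Type*} [MeasurableSpace γ]

/-- Pushforward of a product measure under coordinatewise measure-preserving maps. -/
lemma map_pi_coord {ι : Type*} [Fintype ι] (κ : Measure γ) [IsProbabilityMeasure κ]
    (g : ι → γ → γ) (hg : ∀ i, Measurable (g i)) (hκ : ∀ i, κ.map (g i) = κ) :
    (Measure.pi fun _ : ι => κ).map (fun f i => g i (f i)) = Measure.pi fun _ : ι => κ := by
  have hΦ : Measurable fun (f : ι → γ) i => g i (f i) :=
    measurable_pi_lambda _ fun i => (hg i).comp (measurable_pi_apply i)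
  refine (Measure.pi_eq fun s hs => ?_).symm
  rw [Measure.map_apply hΦ (MeasurableSet.univ_pi hs)]
  have hpre : (fun (f : ι → γ) i => g i (f i)) ⁻¹' Set.pi Set.univ s
      = Set.pi Set.univ (fun i => g i ⁻¹' s i) := by
    ext f; simp [Set.mem_pi]
  rw [hpre, Measure.pi_pi]
  exact Finset.prod_congr rfl fun i _ => by
    rw [← Measure.map_apply (hg i) (hs i), hκ i]

/-- Pushforward of an iid product measure under a permutation of coordinates. -/
lemma map_pi_comp_equiv {ι : Type*} [Fintype ι] (κ : Measure γ) [IsProbabilityMeasure κ]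
    (e : ι ≃ ι) :
    (Measure.pi fun _ : ι => κ).map (fun f : ι → γ => f ∘ e) = Measure.pi fun _ : ι => κ := by
  have hΦ : Measurable fun (f : ι → γ) => f ∘ e :=
    measurable_pi_lambda _ fun i => measurable_pi_apply (e i)
  refine (Measure.pi_eq fun s hs => ?_).symm
  rw [Measure.map_apply hΦ (MeasurableSet.univ_pi hs)]
  have hpre : (fun (f : ι → γ) => f ∘ e) ⁻¹' Set.pi Set.univ s
      = Set.pi Set.univ (fun j => s (e.symm j)) := by
    ext f
    simp only [Set.mem_preimage, Set.mem_pi, Set.mem_univ, forall_true_left, Function.comp]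
    constructor
    · intro h j; have := h (e.symm j); rwa [Equiv.apply_symm_apply] at this
    · intro h i; have := h (e i); rwa [Equiv.symm_apply_apply] at this
  rw [hpre, Measure.pi_pi]
  exact (Equiv.prod_comp e.symm fun j => κ (s j)).symm ▸ rfl

/-- Events depending on disjoint blocks of coordinates are independent under a product
measure. -/
lemma pi_blocks_inter {ι : Type*} [Fintype ι] (κ : Measure γ) [IsProbabilityMeasure κ]
    [Nonempty γ] (q : ι → Prop) [DecidablePred q] {A B : Set (ι → γ)}
    (hA : MeasurableSet A) (hB : MeasurableSet B)
    (hAdep : ∀ f f' : ι → γ, (∀ i, q i → f i = f' i) → f ∈ A → f' ∈ A)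
    (hBdep : ∀ f f' : ι → γ, (∀ i, ¬ q i → f i = f' i) → f ∈ B → f' ∈ B) :
    Measure.pi (fun _ : ι => κ) (A ∩ B)
      = Measure.pi (fun _ : ι => κ) A * Measure.pi (fun _ : ι => κ) B := by
  classical
  set e := MeasurableEquiv.piEquivPiSubtypeProd (fun _ : ι => γ) q with he
  have mp := measurePreserving_piEquivPiSubtypeProd (fun _ : ι => κ) q
  obtain ⟨c⟩ := ‹Nonempty γ›
  set ext1 : ({i // q i} → γ) → (ι → γ) := fun gq => e.symm (gq, fun _ => c) with hext1
  set ext2 : ({i // ¬ q i} → γ) → (ι → γ) := fun gq => e.symm ((fun _ => c), gq) with hext2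
  have hext1m : Measurable ext1 := e.symm.measurable.comp (measurable_id.prodMk measurable_const)
  have hext2m : Measurable ext2 := e.symm.measurable.comp (measurable_const.prodMk measurable_id)
  set A' := ext1 ⁻¹' A with hA'
  set B' := ext2 ⁻¹' B with hB'
  have hA'm : MeasurableSet A' := hext1m hA
  have hB'm : MeasurableSet B' := hext2m hB
  have hsymm_eval : ∀ (g : {i // q i} → γ) (h : {i // ¬ q i} → γ) (i : ι),
      e.symm (g, h) i = if hi : q i then g ⟨i, hi⟩ else h ⟨i, hi⟩ := by
    intro g h i
    rfl
  have heval : ∀ (p : ι → γ) (i : ι), q i → ext1 ((e p).1) i = p i := by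
    intro p i hi
    show e.symm ((e p).1, fun _ => c) i = p i
    rw [hsymm_eval, dif_pos hi]
    rfl
  have heval2 : ∀ (p : ι → γ) (i : ι), ¬ q i → ext2 ((e p).2) i = p i := by
    intro p i hi
    show e.symm ((fun _ => c), (e p).2) i = p i
    rw [hsymm_eval, dif_neg hi]
    rfl
  have hAeq : A = e ⁻¹' (A' ×ˢ Set.univ) := by
    ext p
    simp only [Set.mem_preimage, Set.mem_prod, Set.mem_univ, and_true, hA', Set.mem_preimage]
    constructor
    · exact fun hp => hAdep p _ (fun i hi => (heval p i hi).symm) hp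
    · exact fun hp => hAdep _ p (fun i hi => heval p i hi) hp
  have hBeq : B = e ⁻¹' (Set.univ ×ˢ B') := by
    ext p
    simp only [Set.mem_preimage, Set.mem_prod, Set.mem_univ, true_and, hB', Set.mem_preimage]
    constructor
    · exact fun hp => hBdep p _ (fun i hi => (heval2 p i hi).symm) hp
    · exact fun hp => hBdep _ p (fun i hi => heval2 p i hi) hp
  have key : ∀ (U : Set ({i // q i} → γ)) (V : Set ({i // ¬ q i} → γ)),
      MeasurableSet U → MeasurableSet V →
      Measure.pi (fun _ : ι => κ) (e ⁻¹' (U ×ˢ V))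
        = Measure.pi (fun _ : {i // q i} => κ) U * Measure.pi (fun _ : {i // ¬ q i} => κ) V := by
    intro U V hU hV
    rw [← Measure.map_apply e.measurable (hU.prod hV), mp.map_eq, Measure.prod_prod]
  have h1 : Measure.pi (fun _ : ι => κ) (A ∩ B)
      = Measure.pi (fun _ : {i // q i} => κ) A' * Measure.pi (fun _ : {i // ¬ q i} => κ) B' := by
    rw [hAeq, hBeq, ← Set.preimage_inter, Set.prod_inter_prod, Set.univ_inter, Set.inter_univ]
    exact key _ _ hA'm hB'm
  have h2 : Measure.pi (fun _ : ι => κ) A = Measure.pi (fun _ : {i // q i} => κ) A' := by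
    rw [hAeq, key _ _ hA'm MeasurableSet.univ, measure_univ, mul_one]
  have h3 : Measure.pi (fun _ : ι => κ) B = Measure.pi (fun _ : {i // ¬ q i} => κ) B' := by
    rw [hBeq, key _ _ MeasurableSet.univ hB'm, measure_univ, one_mul]
  rw [h1, h2, h3]



variable {γ : Type*} [MeasurableSpace γ]

lemma map_tuple_pi {Ω : Type*} [MeasurableSpace Ω] (μ : Measure Ω) [IsProbabilityMeasure μ]
    (Y : ℕ → Ω → γ) (hY : ∀ i, Measurable (Y i))
    (hind : iIndepFun Y μ)
    (hid : ∀ i, μ.map (Y i) = μ.map (Y 1)) (N : ℕ) :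
    μ.map (fun ω (i : Fin N) => Y (i : ℕ) ω) = Measure.pi (fun _ : Fin N => μ.map (Y 1)) := by
  classical
  have hmeas : Measurable (fun ω (i : Fin N) => Y (i : ℕ) ω) :=
    measurable_pi_lambda _ fun i => hY _
  haveI : IsProbabilityMeasure (μ.map (Y 1)) := Measure.isProbabilityMeasure_map (hY 1).aemeasurable
  refine (Measure.pi_eq fun s hs => ?_).symm
  rw [Measure.map_apply hmeas (MeasurableSet.univ_pi hs)]
  set s' : ℕ → Set γ := fun j => if h : j < N then s ⟨j, h⟩ else Set.univ with hs'
  have hms' : ∀ j, MeasurableSet (s' j) := by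
    intro j
    rw [hs']
    dsimp only
    split
    · exact hs _
    · exact MeasurableSet.univ
  have hpre : (fun ω (i : Fin N) => Y (i : ℕ) ω) ⁻¹' Set.pi Set.univ s
      = ⋂ j ∈ Finset.range N, Y j ⁻¹' s' j := by
    ext ω
    simp only [Set.mem_preimage, Set.mem_pi, Set.mem_univ, forall_true_left, Set.mem_iInter,
      Finset.mem_range]
    constructor
    · intro h j hj
      have := h ⟨j, hj⟩
      simpa [s', dif_pos hj] using this
    · intro h i
      have := h i.val i.isLt
      simpa [s', dif_pos i.isLt] using this
  rw [hpre, hind.measure_inter_preimage_eq_mul (Finset.range N) (fun j _ => hms' j)]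
  have hterm : ∀ j ∈ Finset.range N, μ (Y j ⁻¹' s' j) = (μ.map (Y 1)) (s' j) := fun j _ => by
    rw [← hid j, Measure.map_apply (hY j) (hms' j)]
  rw [Finset.prod_congr rfl hterm,
    ← Fin.prod_univ_eq_prod_range (fun j => (μ.map (Y 1)) (s' j)) N]
  refine Finset.prod_congr rfl fun i _ => ?_
  congr 1
  simp [s', dif_pos i.isLt]

lemma map_pair_tuple {Ω : Type*} [MeasurableSpace Ω] (μ : Measure Ω) [IsProbabilityMeasure μ]
    {E F : Type*} [MeasurableSpace E] [MeasurableSpace F]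
    (X : ℕ → Ω → E) (W : ℕ → Ω → F)
    (hX : ∀ i, Measurable (X i)) (hW : ∀ i, Measurable (W i))
    (hXind : iIndepFun X μ)
    (hXid : ∀ i, μ.map (X i) = μ.map (X 1))
    (hWind : iIndepFun W μ)
    (hWid : ∀ i, μ.map (W i) = μ.map (W 1))
    (hXW : IndepFun (fun ω i => X i ω) (fun ω i => W i ω) μ) (N : ℕ) :
    μ.map (fun ω (i : Fin N) => (X (i : ℕ) ω, W (i : ℕ) ω))
      = Measure.pi (fun _ : Fin N => (μ.map (X 1)).prod (μ.map (W 1))) := by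
  haveI : IsProbabilityMeasure (μ.map (X 1)) := Measure.isProbabilityMeasure_map (hX 1).aemeasurable
  haveI : IsProbabilityMeasure (μ.map (W 1)) := Measure.isProbabilityMeasure_map (hW 1).aemeasurable
  set VX := fun ω (i : Fin N) => X (i : ℕ) ω with hVX
  set VW := fun ω (i : Fin N) => W (i : ℕ) ω with hVW
  have hVXm : Measurable VX := measurable_pi_lambda _ fun i => hX _
  have hVWm : Measurable VW := measurable_pi_lambda _ fun i => hW _
  have h1 : μ.map VX = Measure.pi (fun _ : Fin N => μ.map (X 1)) :=
    map_tuple_pi μ X hX hXind hXid N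
  have h2 : μ.map VW = Measure.pi (fun _ : Fin N => μ.map (W 1)) :=
    map_tuple_pi μ W hW hWind hWid N
  have hVind : IndepFun VX VW μ := by
    have hφ : Measurable (fun (g : ℕ → E) (i : Fin N) => g (i : ℕ)) :=
      measurable_pi_lambda _ fun i => measurable_pi_apply _
    have hψ : Measurable (fun (g : ℕ → F) (i : Fin N) => g (i : ℕ)) :=
      measurable_pi_lambda _ fun i => measurable_pi_apply _
    exact hXW.comp hφ hψ
  have h3 : μ.map (fun ω => (VX ω, VW ω)) = (μ.map VX).prod (μ.map VW) :=
    (indepFun_iff_map_prod_eq_prod_map_map hVXm.aemeasurable hVWm.aemeasurable).1 hVind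
  set e := MeasurableEquiv.arrowProdEquivProdArrow E F (Fin N) with he
  have mp := measurePreserving_arrowProdEquivProdArrow E F (Fin N)
    (fun _ => μ.map (X 1)) (fun _ => μ.map (W 1))
  set V := fun ω (i : Fin N) => (X (i : ℕ) ω, W (i : ℕ) ω) with hV
  have hVm : Measurable V := measurable_pi_lambda _ fun i => (hX _).prodMk (hW _)
  have hcomp : (fun ω => (VX ω, VW ω)) = fun ω => e (V ω) := rfl
  have h4 : (μ.map V).map e
      = (Measure.pi (fun _ : Fin N => (μ.map (X 1)).prod (μ.map (W 1)))).map e := by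
    rw [Measure.map_map e.measurable hVm, mp.map_eq,
      show (⇑e ∘ V : Ω → (Fin N → E) × (Fin N → F)) = fun ω => (VX ω, VW ω) from rfl, h3, h1, h2]
  have h5 := congrArg (Measure.map ⇑e.symm) h4
  rwa [MeasurableEquiv.map_symm_map, MeasurableEquiv.map_symm_map] at h5



-- measurability
instance : MeasurableAdd₂ (Fin d → ℤ) := ⟨measurable_of_countable _⟩

lemma meas_XX (i : ℕ) : Measurable (XX i : Om d n → Fin d → ℤ) :=
  measurable_fst.comp (measurable_pi_apply _)

lemma meas_WW (i : ℕ) : Measurable (WW i : Om d n → ℝ) :=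
  measurable_snd.comp (measurable_pi_apply _)

lemma meas_SS (k : ℕ) : Measurable (SS k : Om d n → Fin d → ℤ) := by
  unfold SS; exact Finset.measurable_sum _ fun i _ => meas_XX _

lemma meas_HH (m : ℕ) : Measurable (HH m : Om d n → ℝ) := by
  unfold HH
  refine Finset.measurable_sum _ fun j _ => Finset.measurable_sum _ fun k _ => ?_
  have hcond : MeasurableSet {p : Om d n | j < k ∧ SS j p = SS k p} := by
    by_cases h : j < k
    · simp only [h, true_and]
      exact measurableSet_eq_fun (meas_SS j) (meas_SS k)
    · simp only [h, false_and, Set.setOf_false]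
      exact MeasurableSet.empty
  exact Measurable.ite hcond ((meas_WW j).mul (meas_WW k)) measurable_const

lemma meas_CC (n' l : ℕ) : Measurable (CC n' l : Om d n → ℝ) := by
  unfold CC
  refine Finset.measurable_sum _ fun j _ => Finset.measurable_sum _ fun k _ => ?_
  exact Measurable.ite (measurableSet_eq_fun (meas_SS j) (meas_SS k))
    ((meas_WW j).mul (meas_WW k)) measurable_const

lemma meas_DD (n' l : ℕ) : Measurable (DD n' l : Om d n → ℝ) := by
  unfold DD
  refine Finset.measurable_sum _ fun j _ => Finset.measurable_sum _ fun k _ => ?_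
  have hcond : MeasurableSet {p : Om d n | j < k ∧ (∑ i ∈ Finset.Ico j k, XX (i+1) p) = 0} := by
    by_cases h : j < k
    · simp only [h, true_and]
      exact measurableSet_eq_fun
        (Finset.measurable_sum _ fun i _ => meas_XX _) measurable_const
    · simp only [h, false_and, Set.setOf_false]
      exact MeasurableSet.empty
  exact Measurable.ite hcond ((meas_WW j).mul (meas_WW k)) measurable_const


lemma meas_TT (l : ℕ) : Measurable (TT l : Om d n → Om d n) := by
  refine measurable_pi_lambda _ fun i => ?_
  by_cases h : l < (i : ℕ)
  · simp only [TT, h, if_true]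
    exact (measurable_fst.comp (measurable_pi_apply i)).prodMk
      ((measurable_snd.comp (measurable_pi_apply i)).neg)
  · simp only [TT, h, if_false]
    exact measurable_pi_apply i

lemma meas_TH (l : ℕ) : Measurable (TH l : Om d n → Om d n) :=
  measurable_pi_lambda _ fun i => measurable_pi_apply _

-- dependence lemmas
lemma WW_depend {m : ℕ} {f f' : Om d n} (h : ∀ i : Fin (n+1), (i : ℕ) ≤ m → f i = f' i)
    {j : ℕ} (hj : j ≤ m) : WW j f = WW j f' := by
  unfold WW
  rw [h _ (by rw [Fin.val_natCast]; exact le_trans (Nat.mod_le _ _) hj)]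

lemma XX_depend {m : ℕ} {f f' : Om d n} (h : ∀ i : Fin (n+1), (i : ℕ) ≤ m → f i = f' i)
    {j : ℕ} (hj : j ≤ m) : XX j f = XX j f' := by
  unfold XX
  rw [h _ (by rw [Fin.val_natCast]; exact le_trans (Nat.mod_le _ _) hj)]

lemma SS_depend {m : ℕ} {f f' : Om d n} (h : ∀ i : Fin (n+1), (i : ℕ) ≤ m → f i = f' i)
    {k : ℕ} (hk : k ≤ m) : SS k f = SS k f' := by
  unfold SS
  exact Finset.sum_congr rfl fun i hi => XX_depend h (by
    rw [Finset.mem_range] at hi; omega)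

lemma HH_depend {m : ℕ} {f f' : Om d n} (h : ∀ i : Fin (n+1), (i : ℕ) ≤ m → f i = f' i) :
    HH m f = HH m f' := by
  unfold HH
  refine Finset.sum_congr rfl fun j hj => Finset.sum_congr rfl fun k hk => ?_
  rw [Finset.mem_Icc] at hj hk
  rw [SS_depend h hj.2, SS_depend h hk.2, WW_depend h hj.2, WW_depend h hk.2]

lemma WW_depend_high {l : ℕ} {f f' : Om d n} (h : ∀ i : Fin (n+1), l < (i : ℕ) → f i = f' i)
    {j : ℕ} (hlj : l < j) (hj : j ≤ n) : WW j f = WW j f' := by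
  unfold WW
  rw [h _ (by rw [val_cast hj]; omega)]

lemma XX_depend_high {l : ℕ} {f f' : Om d n} (h : ∀ i : Fin (n+1), l < (i : ℕ) → f i = f' i)
    {j : ℕ} (hlj : l < j) (hj : j ≤ n) : XX j f = XX j f' := by
  unfold XX
  rw [h _ (by rw [val_cast hj]; omega)]

lemma DD_depend {l : ℕ} {f f' : Om d n} (h : ∀ i : Fin (n+1), l < (i : ℕ) → f i = f' i) :
    DD n l f = DD n l f' := by
  unfold DD
  refine Finset.sum_congr rfl fun j hj => Finset.sum_congr rfl fun k hk => ?_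
  rw [Finset.mem_Icc] at hj hk
  have hsum : (∑ i ∈ Finset.Ico j k, XX (i+1) f) = ∑ i ∈ Finset.Ico j k, XX (i+1) f' := by
    refine Finset.sum_congr rfl fun i hi => ?_
    rw [Finset.mem_Ico] at hi
    exact XX_depend_high h (by omega) (by omega)
  rw [hsum, WW_depend_high h (by omega) (by omega), WW_depend_high h (by omega) (by omega)]


end LevyPolymer

open LevyPolymer


/-- **Lévy-type maximal inequality for the polymer energy (Lemma 4.1):**
for `s, t > 0` and `n ≥ 2`,
`(min_{1≤k≤n} P{|H_k| ≤ s}) · P{max_{1≤l≤n} |H_l| ≥ s + t} ≤ 2 P{|H_n| ≥ t}`. -/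
theorem polymer_energy_levy_maximal_inequality
    {Ω : Type*} [MeasurableSpace Ω] (μ : Measure Ω) [IsProbabilityMeasure μ]
    (d : ℕ) (hd : 1 ≤ d)
    (X : ℕ → Ω → (Fin d → ℤ)) (W : ℕ → Ω → ℝ)
    (hXmeas : ∀ i, Measurable (X i)) (hWmeas : ∀ i, Measurable (W i))
    (hXindep : iIndepFun X μ)
    (hXident : ∀ i, Measure.map (X i) μ = Measure.map (X 1) μ)
    (hXsymm : Measure.map (X 1) μ = Measure.map (fun ω => -(X 1 ω)) μ)
    (hXsupp : AddSubgroup.closure {x : Fin d → ℤ | μ {ω | X 1 ω = x} ≠ 0} = ⊤)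
    (hWindep : iIndepFun W μ)
    (hWident : ∀ i, Measure.map (W i) μ = Measure.map (W 1) μ)
    (hWsymm : Measure.map (W 1) μ = Measure.map (fun ω => -(W 1 ω)) μ)
    (hWmom : ∫ ω, (W 1 ω) ^ 2 ∂μ = 1)
    (hWexp : ∃ l0 > 0, Integrable (fun ω => Real.exp (l0 * (W 1 ω) ^ 2)) μ)
    (hXW : IndepFun (fun ω i => X i ω) (fun ω i => W i ω) μ)
    (S : ℕ → Ω → (Fin d → ℤ)) (hS : ∀ n ω, S n ω = ∑ i ∈ Finset.range n, X (i + 1) ω)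
    (H : ℕ → Ω → ℝ)
    (hH : ∀ n ω, H n ω = ∑ j ∈ Finset.Icc 1 n, ∑ k ∈ Finset.Icc 1 n,
        if j < k ∧ S j ω = S k ω then W j ω * W k ω else 0)
    (s t : ℝ) (hs : 0 < s) (ht : 0 < t) (n : ℕ) (hn : 2 ≤ n) :
    ((Finset.Icc 1 n).inf' (Finset.nonempty_Icc.mpr (by omega))
        (fun k => μ {ω | |H k ω| ≤ s})) *
      μ {ω | s + t ≤ (Finset.Icc 1 n).sup' (Finset.nonempty_Icc.mpr (by omega))
        (fun l => |H l ω|)}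
      ≤ 2 * μ {ω | t ≤ |H n ω|} := by
  classical
  have hne : (Finset.Icc 1 n).Nonempty := Finset.nonempty_Icc.mpr (by omega)
  set α := Measure.map (X 1) μ with hα
  set β := Measure.map (W 1) μ with hβ
  haveI hαP : IsProbabilityMeasure α := Measure.isProbabilityMeasure_map (hXmeas 1).aemeasurable
  haveI hβP : IsProbabilityMeasure β := Measure.isProbabilityMeasure_map (hWmeas 1).aemeasurable
  set κ := α.prod β with hκ
  set π := Measure.pi (fun _ : Fin (n+1) => κ) with hπ
  haveI : IsProbabilityMeasure π := by rw [hπ]; infer_instance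
  set V : Ω → Om d n := fun ω i => (X (i : ℕ) ω, W (i : ℕ) ω) with hV
  have hVm : Measurable V := measurable_pi_lambda _ fun i => ((hXmeas _).prodMk (hWmeas _))
  have hlaw : μ.map V = π :=
    map_pair_tuple μ X W hXmeas hWmeas hXindep hXident hWindep hWident hXW (n+1)
  have htrans : ∀ Cs : Set (Om d n), MeasurableSet Cs → μ (V ⁻¹' Cs) = π Cs := fun Cs hCs => by
    rw [← hlaw]; exact (Measure.map_apply hVm hCs).symm
  -- correspondence of random variables
  have hXcorr : ∀ i, i ≤ n → ∀ ω, XX i (V ω) = X i ω := by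
    intro i hi ω
    show (V ω ((i : Fin (n+1)))).1 = X i ω
    rw [hV]
    simp only
    rw [val_cast hi]
  have hWcorr : ∀ i, i ≤ n → ∀ ω, WW i (V ω) = W i ω := by
    intro i hi ω
    show (V ω ((i : Fin (n+1)))).2 = W i ω
    rw [hV]
    simp only
    rw [val_cast hi]
  have hScorr : ∀ k, k ≤ n → ∀ ω, SS k (V ω) = S k ω := by
    intro k hk ω
    rw [hS]
    unfold SS
    refine Finset.sum_congr rfl fun i hi => ?_
    rw [Finset.mem_range] at hi
    exact hXcorr (i+1) (by omega) ω
  have hHcorr : ∀ m, m ≤ n → ∀ ω, HH m (V ω) = H m ω := by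
    intro m hm ω
    rw [hH]
    unfold HH
    refine Finset.sum_congr rfl fun j hj => Finset.sum_congr rfl fun k hk => ?_
    rw [Finset.mem_Icc] at hj hk
    rw [hScorr j (by omega) ω, hScorr k (by omega) ω,
      hWcorr j (by omega) ω, hWcorr k (by omega) ω]
  -- events on the canonical space
  set G : Set (Om d n) := {p | t ≤ |HH n p|} with hG
  set ES : ℕ → Set (Om d n) := fun m => {p | |HH m p| ≤ s} with hES
  set AA : ℕ → Set (Om d n) :=
    fun l => {p | s + t ≤ |HH l p| ∧ ∀ k, 1 ≤ k → k < l → |HH k p| < s + t} with hAA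
  have hGm : MeasurableSet G := measurableSet_le measurable_const (meas_HH n).abs
  have hESm : ∀ m, MeasurableSet (ES m) := fun m =>
    measurableSet_le (meas_HH m).abs measurable_const
  have hAAm : ∀ l, MeasurableSet (AA l) := by
    intro l
    have hrw : AA l = {p : Om d n | s + t ≤ |HH l p|} ∩
        ⋂ k ∈ Finset.Ico 1 l, {p : Om d n | |HH k p| < s + t} := by
      ext p
      simp only [hAA, Set.mem_setOf_eq, Set.mem_inter_iff, Set.mem_iInter, Finset.mem_Ico]
      constructor
      · rintro ⟨h1, h2⟩; exact ⟨h1, fun k hk => h2 k hk.1 hk.2⟩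
      · rintro ⟨h1, h2⟩; exact ⟨h1, fun k hk1 hk2 => h2 k ⟨hk1, hk2⟩⟩
    rw [hrw]
    exact (measurableSet_le measurable_const (meas_HH l).abs).inter
      (MeasurableSet.biInter (Finset.Ico 1 l).countable_toSet fun k _ =>
        measurableSet_lt (meas_HH k).abs measurable_const)
  -- transfer of the three probabilities
  have hEμ : ∀ k ∈ Finset.Icc 1 n, μ {ω | |H k ω| ≤ s} = π (ES k) := by
    intro k hk
    rw [Finset.mem_Icc] at hk
    have hset : {ω | |H k ω| ≤ s} = V ⁻¹' (ES k) := by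
      ext ω
      simp only [Set.mem_setOf_eq, Set.mem_preimage, hES, hHcorr k hk.2 ω]
    rw [hset, htrans _ (hESm k)]
  have hGμ : μ {ω | t ≤ |H n ω|} = π G := by
    have hset : {ω | t ≤ |H n ω|} = V ⁻¹' G := by
      ext ω
      simp only [Set.mem_setOf_eq, Set.mem_preimage, hG, hHcorr n le_rfl ω]
    rw [hset, htrans _ hGm]
  set U := {p : Om d n | s + t ≤ (Finset.Icc 1 n).sup' hne fun l => |HH l p|} with hU
  have hUdecomp : U = ⋃ l ∈ Finset.Icc 1 n, AA l := by
    ext p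
    simp only [hU, Set.mem_setOf_eq, Set.mem_iUnion, exists_prop]
    constructor
    · intro hp
      set F := (Finset.Icc 1 n).filter (fun k => s + t ≤ |HH k p|) with hF
      have hFne : F.Nonempty := by
        obtain ⟨b, hb, hbe⟩ := Finset.exists_mem_eq_sup' hne (fun l => |HH l p|)
        exact ⟨b, Finset.mem_filter.mpr ⟨hb, by rw [← hbe]; exact hp⟩⟩
      set l := F.min' hFne with hl
      have hlF : l ∈ F := Finset.min'_mem _ _
      rw [hF, Finset.mem_filter] at hlF
      refine ⟨l, hlF.1, hlF.2, ?_⟩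
      intro k hk1 hkl
      by_contra hcon
      push_neg at hcon
      have hkF : k ∈ F := by
        rw [hF, Finset.mem_filter, Finset.mem_Icc]
        have := Finset.mem_Icc.mp hlF.1
        exact ⟨⟨hk1, by omega⟩, hcon⟩
      have := Finset.min'_le F k hkF
      omega
    · rintro ⟨l, hl, hpl, -⟩
      exact le_trans hpl (Finset.le_sup' (fun l => |HH l p|) hl)
  have hUm : MeasurableSet U := by
    rw [hUdecomp]
    exact (Finset.Icc 1 n).measurableSet_biUnion fun l _ => hAAm l
  have hUμ : μ {ω | s + t ≤ (Finset.Icc 1 n).sup' hne fun l => |H l ω|} = π U := by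
    have hset : {ω | s + t ≤ (Finset.Icc 1 n).sup' hne fun l => |H l ω|} = V ⁻¹' U := by
      ext ω
      simp only [Set.mem_setOf_eq, Set.mem_preimage, hU]
      have heq : ((Finset.Icc 1 n).sup' hne fun l => |HH l (V ω)|)
          = (Finset.Icc 1 n).sup' hne fun l => |H l ω| :=
        Finset.sup'_congr hne rfl fun l hl => by rw [hHcorr l (Finset.mem_Icc.mp hl).2 ω]
      rw [heq]
    rw [hset, htrans _ hUm]
  -- pairwise disjointness of the first-entry events
  have hAAdisj : (↑(Finset.Icc 1 n) : Set ℕ).PairwiseDisjoint AA := by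
    have key : ∀ a b : ℕ, 1 ≤ a → a < b → Disjoint (AA a) (AA b) := by
      intro a b ha hab
      rw [Set.disjoint_left]
      intro p hpa hpb
      have h1 := hpa.1
      have h2 := hpb.2 a ha hab
      linarith
    intro a ha b hb hab
    rcases hab.lt_or_gt with h | h
    · exact key a b (Finset.mem_Icc.mp ha).1 h
    · exact (key b a (Finset.mem_Icc.mp hb).1 h).symm
  -- symmetry of β
  have hβneg : β.map Neg.neg = β := by
    have h1 : β.map Neg.neg = μ.map (fun ω => -(W 1 ω)) := by
      rw [hβ, Measure.map_map measurable_neg (hWmeas 1)]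
      rfl
    rw [h1, ← hWsymm]
  -- the key per-index inequality
  have key : ∀ l ∈ Finset.Icc 1 n,
      ((Finset.Icc 1 n).inf' hne fun k => π (ES k)) * π (AA l) ≤ 2 * π (AA l ∩ G) := by
    intro l hl
    obtain ⟨h1l, hln⟩ := Finset.mem_Icc.mp hl
    set m0 := (Finset.Icc 1 n).inf' hne fun k => π (ES k) with hm0
    set B := {p : Om d n | |DD n l p| ≤ s} with hB
    have hBm : MeasurableSet B := measurableSet_le (meas_DD n l).abs measurable_const
    -- (i) m0 ≤ π B
    have hTHlaw : π.map (TH l) = π := by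
      have hrfl : (TH l : Om d n → Om d n)
          = fun p => p ∘ (Equiv.addRight ((l : ℕ) : Fin (n+1))) := by
        funext p
        funext i
        simp only [TH, Function.comp, Equiv.coe_addRight]
      rw [hπ, hrfl]
      exact map_pi_comp_equiv κ (Equiv.addRight _)
    have hm0B : m0 ≤ π B := by
      rcases eq_or_lt_of_le hln with hEq | hLt
      · have hBuniv : B = Set.univ := by
          ext p
          simp only [hB, Set.mem_setOf_eq, Set.mem_univ, iff_true]
          rw [hEq, DD_self]
          simpa using hs.le
        rw [hBuniv, measure_univ]
        calc m0 ≤ π (ES n) := Finset.inf'_le _ (Finset.mem_Icc.mpr ⟨by omega, le_rfl⟩)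
          _ ≤ 1 := prob_le_one
      · have hmem : n - l ∈ Finset.Icc 1 n := Finset.mem_Icc.mpr ⟨by omega, by omega⟩
        have hπB : π B = π (ES (n - l)) := by
          have hpre : B = (TH l) ⁻¹' (ES (n - l)) := by
            ext p
            simp only [hB, hES, Set.mem_setOf_eq, Set.mem_preimage, DD_eq_TH hln p]
          rw [hpre, ← Measure.map_apply (meas_TH l) (hESm (n - l)), hTHlaw]
        rw [hπB]
        exact Finset.inf'_le _ hmem
    -- (ii) independence of AA l and B
    have hind : π (AA l ∩ B) = π (AA l) * π B := by
      rw [hπ]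
      refine pi_blocks_inter κ (fun i : Fin (n+1) => (i : ℕ) ≤ l) (hAAm l) hBm ?_ ?_
      · intro f f' hag hf
        have hHk : ∀ k, k ≤ l → HH k f' = HH k f := fun k hk =>
          HH_depend fun i hi => (hag i (le_trans hi hk)).symm
        simp only [hAA, Set.mem_setOf_eq] at hf ⊢
        refine ⟨by rw [hHk l le_rfl]; exact hf.1, fun k hk1 hkl => ?_⟩
        rw [hHk k (by omega)]
        exact hf.2 k hk1 hkl
      · intro f f' hag hf
        have : DD n l f' = DD n l f := DD_depend fun i hi => (hag i (by omega)).symm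
        simp only [hB, Set.mem_setOf_eq] at hf ⊢
        rw [this]
        exact hf
    -- (iii) flip invariance
    have hTTlaw : π.map (TT l) = π := by
      have hmeasg : ∀ i : Fin (n+1), Measurable (fun q : (Fin d → ℤ) × ℝ =>
          if l < (i : ℕ) then (q.1, -q.2) else q) := by
        intro i
        by_cases h : l < (i : ℕ)
        · simp only [h, if_true]
          exact measurable_fst.prodMk measurable_snd.neg
        · simp only [h, if_false]
          exact measurable_id
      have hmapg : ∀ i : Fin (n+1), κ.map (fun q : (Fin d → ℤ) × ℝ =>
          if l < (i : ℕ) then (q.1, -q.2) else q) = κ := by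
        intro i
        by_cases h : l < (i : ℕ)
        · simp only [h, if_true]
          have hPm : (fun q : (Fin d → ℤ) × ℝ => (q.1, -q.2)) = Prod.map id Neg.neg := rfl
          rw [hPm, hκ, ← Measure.map_prod_map α β measurable_id measurable_neg,
            Measure.map_id, hβneg]
        · simp only [h, if_false]
          exact Measure.map_id
      have h := map_pi_coord κ
        (g := fun (i : Fin (n+1)) (q : (Fin d → ℤ) × ℝ) =>
          if l < (i : ℕ) then (q.1, -q.2) else q) hmeasg hmapg
      rw [hπ]
      exact h
    set G' := {p : Om d n | t ≤ |HH l p - CC n l p + DD n l p|} with hG'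
    have hG'm : MeasurableSet G' :=
      measurableSet_le measurable_const (((meas_HH l).sub (meas_CC n l)).add (meas_DD n l)).abs
    have hflipn : ∀ p : Om d n, HH n (TT l p) = HH l p - CC n l p + DD n l p := fun p => by
      rw [HH_decomp h1l hln (TT l p), HH_TT le_rfl, CC_TT, DD_TT]
      ring
    have hTTpre : TT l ⁻¹' (AA l ∩ G) = AA l ∩ G' := by
      ext p
      simp only [Set.mem_preimage, Set.mem_inter_iff, hAA, hG, hG', Set.mem_setOf_eq]
      have h1 : HH l (TT l p) = HH l p := HH_TT le_rfl p
      have h2 : ∀ k, k < l → HH k (TT l p) = HH k p := fun k hk => HH_TT (le_of_lt hk) p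
      constructor
      · rintro ⟨⟨ha, hb⟩, hc⟩
        rw [h1] at ha
        rw [hflipn p] at hc
        exact ⟨⟨ha, fun k hk1 hkl => by rw [← h2 k hkl]; exact hb k hk1 hkl⟩, hc⟩
      · rintro ⟨⟨ha, hb⟩, hc⟩
        rw [← hflipn p] at hc
        exact ⟨⟨by rw [h1]; exact ha, fun k hk1 hkl => by rw [h2 k hkl]; exact hb k hk1 hkl⟩, hc⟩
    have hflip : π (AA l ∩ G') = π (AA l ∩ G) := by
      rw [← hTTpre, ← Measure.map_apply (meas_TT l) ((hAAm l).inter hGm), hTTlaw]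
    -- (iv) inclusion
    have hincl : AA l ∩ B ⊆ (AA l ∩ G) ∪ (AA l ∩ G') := by
      rintro p ⟨hpA, hpB⟩
      simp only [hB, Set.mem_setOf_eq] at hpB
      have hA1 : s + t ≤ |HH l p| := hpA.1
      by_contra hcon
      simp only [Set.mem_union, Set.mem_inter_iff, not_or, not_and] at hcon
      have hnG : ¬ (t ≤ |HH n p|) := hcon.1 hpA
      have hnG' : ¬ (t ≤ |HH l p - CC n l p + DD n l p|) := hcon.2 hpA
      push_neg at hnG hnG'
      have hdec : HH n p = HH l p + CC n l p + DD n l p := HH_decomp h1l hln p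
      have habs1 : |2 * HH l p| ≤ |2 * HH l p + 2 * DD n l p| + |2 * DD n l p| := by
        have := abs_add_le (2 * HH l p + 2 * DD n l p) (-(2 * DD n l p))
        simpa using this
      have habs2 : |2 * HH l p + 2 * DD n l p|
          ≤ |HH n p| + |HH l p - CC n l p + DD n l p| := by
        have h := abs_add_le (HH n p) (HH l p - CC n l p + DD n l p)
        have : HH n p + (HH l p - CC n l p + DD n l p) = 2 * HH l p + 2 * DD n l p := by
          rw [hdec]; ring
        rw [this] at h
        exact h
      have h2l : |2 * HH l p| = 2 * |HH l p| := by
        rw [abs_mul]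
        norm_num
      have h2d : |2 * DD n l p| = 2 * |DD n l p| := by
        rw [abs_mul]
        norm_num
      linarith
    -- combine
    calc m0 * π (AA l) ≤ π B * π (AA l) :=
          mul_le_mul_left hm0B _
      _ = π (AA l ∩ B) := by rw [hind, mul_comm]
      _ ≤ π ((AA l ∩ G) ∪ (AA l ∩ G')) := measure_mono hincl
      _ ≤ π (AA l ∩ G) + π (AA l ∩ G') := measure_union_le _ _
      _ = 2 * π (AA l ∩ G) := by rw [hflip, two_mul]
  -- summation
  rw [Finset.inf'_congr hne rfl hEμ, hUμ, hGμ]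
  have hUsum : π U = ∑ l ∈ Finset.Icc 1 n, π (AA l) := by
    rw [hUdecomp]
    exact measure_biUnion_finset hAAdisj fun l _ => hAAm l
  have hUGsum : ∑ l ∈ Finset.Icc 1 n, π (AA l ∩ G) ≤ π G := by
    have hd : (↑(Finset.Icc 1 n) : Set ℕ).PairwiseDisjoint fun l => AA l ∩ G :=
      hAAdisj.mono_on fun l _ => Set.inter_subset_left
    rw [← measure_biUnion_finset hd fun l _ => (hAAm l).inter hGm]
    exact measure_mono (Set.iUnion₂_subset fun l _ => Set.inter_subset_right)
  calc ((Finset.Icc 1 n).inf' hne fun k => π (ES k)) * π U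
      = ∑ l ∈ Finset.Icc 1 n,
          ((Finset.Icc 1 n).inf' hne fun k => π (ES k)) * π (AA l) := by
        rw [hUsum, Finset.mul_sum]
    _ ≤ ∑ l ∈ Finset.Icc 1 n, 2 * π (AA l ∩ G) := Finset.sum_le_sum key
    _ = 2 * ∑ l ∈ Finset.Icc 1 n, π (AA l ∩ G) := by rw [Finset.mul_sum]
    _ ≤ 2 * π G := by
        exact mul_le_mul_right hUGsum 2
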